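/- For the function ρ(t₁,t₂) = ((1-12t₁t₂)^{3/2} + 18t₁t₂ - 1)/(108 t₂²) with ρ₁₁ = (1-12t₁t₂)^{-1/2}, the quantity S := ∂/∂t₁ (ρ₁₂/ρ₁₁) equals (1 - √(1-12t₁t₂)) / (t₂ √(1-12t₁t₂)), and S is nonzero at every point of the domain {t₂ ≠ 0, 0 < 12t₁t₂ < 1} ∪ {t₂ ≠ 0, t₁ ≠ 0, 12t₁t₂ < 0}. -/

import Mathlib

noncomputable section

/-- Partial derivative in the first variable. -/
def pd1 (f : ℝ → ℝ → ℝ) : ℝ → ℝ → ℝ := fun t1 t2 => deriv (fun s => f s t2) t1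

/-- Partial derivative in the second variable. -/
def pd2 (f : ℝ → ℝ → ℝ) : ℝ → ℝ → ℝ := fun t1 t2 => deriv (fun s => f t1 s) t2

/-- The explicit solution `ρ` of the homogeneous Monge–Ampère equation. -/
def rho : ℝ → ℝ → ℝ := fun t1 t2 =>
  ((1 - 12 * t1 * t2) ^ ((3 : ℝ) / 2) + 18 * t1 * t2 - 1) / (108 * t2 ^ 2)

lemma lin_hda (a x : ℝ) : HasDerivAt (fun s : ℝ => 1 - 12 * s * a) (-(12*a)) x := by
  have h := ((hasDerivAt_id x).const_mul (12*a)).const_sub 1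
  simp only [mul_one] at h
  convert h using 2 with s
  · rfl
  · rfl
  all_goals simp only [id]; ring

lemma sqrt_hda (a x : ℝ) (h : 0 < 1 - 12 * x * a) :
    HasDerivAt (fun s : ℝ => Real.sqrt (1 - 12 * s * a)) (-(6*a) / Real.sqrt (1 - 12*x*a)) x := by
  have h2 := (Real.hasDerivAt_sqrt h.ne').comp x (lin_hda a x)
  convert h2 using 1
  · rfl
  · rfl
  · rfl
  field_simp
  ring

lemma pd1_rho (t1 t2 : ℝ) (ht2 : t2 ≠ 0) (h : 0 < 1 - 12 * t1 * t2) :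
    pd1 rho t1 t2 = (1 - Real.sqrt (1 - 12 * t1 * t2)) / (6 * t2) := by
  have hpow : HasDerivAt (fun s : ℝ => (1 - 12 * s * t2) ^ ((3:ℝ)/2))
      (((3:ℝ)/2) * (1 - 12*t1*t2) ^ ((3:ℝ)/2 - 1) * (-(12*t2))) t1 := by
    exact (Real.hasDerivAt_rpow_const (Or.inl h.ne')).comp t1 (lin_hda t2 t1)
  have hlin : HasDerivAt (fun s : ℝ => 18 * s * t2) (18 * t2) t1 := by
    have h := (hasDerivAt_id t1).const_mul (18*t2)
    simp only [mul_one] at h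
    convert h using 2 with s
    · rfl
    · rfl
    simp only [id]; try ring
  have hfull : HasDerivAt (fun s : ℝ => rho s t2)
      ((((3:ℝ)/2) * (1 - 12*t1*t2) ^ ((3:ℝ)/2 - 1) * (-(12*t2)) + 18*t2) / (108 * t2^2)) t1 := by
    have := ((hpow.add hlin).sub_const 1).div_const (108 * t2^2)
    exact this
  have hd := hfull.deriv
  simp only [pd1]
  rw [hd]
  have : ((3:ℝ)/2 - 1) = (1:ℝ)/2 := by norm_num
  rw [this]
  rw [← Real.sqrt_eq_rpow]
  have hs : Real.sqrt (1 - 12*t1*t2) ≠ 0 := (Real.sqrt_pos.2 h).ne'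
  field_simp
  ring

lemma lin_hda2 (a x : ℝ) : HasDerivAt (fun s : ℝ => 1 - 12 * a * s) (-(12*a)) x := by
  have h := ((hasDerivAt_id x).const_mul (12*a)).const_sub 1
  simp only [mul_one] at h
  convert h using 2 with s
  · rfl
  · rfl
  all_goals simp only [id]

lemma sqrt_hda2 (a x : ℝ) (h : 0 < 1 - 12 * a * x) :
    HasDerivAt (fun s : ℝ => Real.sqrt (1 - 12 * a * s)) (-(6*a) / Real.sqrt (1 - 12*a*x)) x := by
  have h2 := (Real.hasDerivAt_sqrt h.ne').comp x (lin_hda2 a x)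
  convert h2 using 1
  · rfl
  · rfl
  · rfl
  field_simp
  ring

lemma pd11_rho (t1 t2 : ℝ) (ht2 : t2 ≠ 0) (h : 0 < 1 - 12 * t1 * t2) :
    pd1 (pd1 rho) t1 t2 = (Real.sqrt (1 - 12 * t1 * t2))⁻¹ := by
  have hopen : IsOpen {s : ℝ | 0 < 1 - 12 * s * t2} :=
    isOpen_lt continuous_const (by continuity)
  have hev : (fun s => pd1 rho s t2) =ᶠ[nhds t1]
      (fun s => (1 - Real.sqrt (1 - 12 * s * t2)) / (6 * t2)) := by
    filter_upwards [hopen.mem_nhds h] with s hs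
    exact pd1_rho s t2 ht2 hs
  have hda : HasDerivAt (fun s : ℝ => (1 - Real.sqrt (1 - 12 * s * t2)) / (6 * t2))
      ((0 - (-(6*t2) / Real.sqrt (1 - 12*t1*t2))) / (6 * t2)) t1 :=
    ((hasDerivAt_const t1 1).sub (sqrt_hda t2 t1 h)).div_const (6*t2)
  have hs : Real.sqrt (1 - 12*t1*t2) ≠ 0 := (Real.sqrt_pos.2 h).ne'
  show deriv (fun s => pd1 rho s t2) t1 = _
  rw [hev.deriv_eq, hda.deriv]
  field_simp
  ring

lemma pd12_rho (t1 t2 : ℝ) (ht2 : t2 ≠ 0) (h : 0 < 1 - 12 * t1 * t2) :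
    pd2 (pd1 rho) t1 t2 =
      (1 - 6*t1*t2 - Real.sqrt (1 - 12 * t1 * t2)) / (6 * t2^2 * Real.sqrt (1 - 12 * t1 * t2)) := by
  have hopen : IsOpen {s : ℝ | 0 < 1 - 12 * t1 * s} :=
    isOpen_lt continuous_const (by continuity)
  have hev : (fun s => pd1 rho t1 s) =ᶠ[nhds t2]
      (fun s => (1 - Real.sqrt (1 - 12 * t1 * s)) / (6 * s)) := by
    filter_upwards [hopen.mem_nhds h, isOpen_compl_singleton.mem_nhds ht2] with s hs hs0
    exact pd1_rho t1 s hs0 hs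
  have hf : HasDerivAt (fun s : ℝ => 1 - Real.sqrt (1 - 12 * t1 * s))
      (0 - (-(6*t1) / Real.sqrt (1 - 12*t1*t2))) t2 :=
    (hasDerivAt_const t2 1).sub (sqrt_hda2 t1 t2 h)
  have hg : HasDerivAt (fun s : ℝ => 6 * s) (6*1) t2 := (hasDerivAt_id t2).const_mul 6
  have hgne : (6:ℝ) * t2 ≠ 0 := by simp [ht2]
  have hda : HasDerivAt (fun s => (1 - Real.sqrt (1 - 12 * t1 * s)) / (6 * s)) _ t2 := hf.div hg hgne
  have hs : Real.sqrt (1 - 12*t1*t2) ≠ 0 := (Real.sqrt_pos.2 h).ne'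
  have hsq : Real.sqrt (1 - 12*t1*t2) * Real.sqrt (1 - 12*t1*t2) = 1 - 12*t1*t2 :=
    Real.mul_self_sqrt h.le
  show deriv (fun s => pd1 rho t1 s) t2 = _
  rw [hev.deriv_eq, hda.deriv]
  generalize Real.sqrt (1 - 12*t1*t2) = r at hs hsq ⊢
  field_simp
  linear_combination hsq

/-- `S = ∂₁(ρ₁₂/ρ₁₁)`. -/
def Sfun : ℝ → ℝ → ℝ :=
  pd1 (fun t1 t2 => pd2 (pd1 rho) t1 t2 / pd1 (pd1 rho) t1 t2)

lemma Sfun_eq (t1 t2 : ℝ) (ht2 : t2 ≠ 0) (h : 0 < 1 - 12 * t1 * t2) :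
    Sfun t1 t2 = (1 - Real.sqrt (1 - 12 * t1 * t2)) / (t2 * Real.sqrt (1 - 12 * t1 * t2)) := by
  have hopen : IsOpen {s : ℝ | 0 < 1 - 12 * s * t2} :=
    isOpen_lt continuous_const (by continuity)
  have hev : (fun s => pd2 (pd1 rho) s t2 / pd1 (pd1 rho) s t2) =ᶠ[nhds t1]
      (fun s => (1 - 6*s*t2 - Real.sqrt (1 - 12 * s * t2)) / (6 * t2^2)) := by
    filter_upwards [hopen.mem_nhds h] with s hs
    rw [pd12_rho s t2 ht2 hs, pd11_rho s t2 ht2 hs]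
    have hsne : Real.sqrt (1 - 12*s*t2) ≠ 0 := (Real.sqrt_pos.2 hs).ne'
    field_simp
    exact mul_div_cancel_left₀ _ (by rw [show 1 - s*t2*12 = 1 - 12*s*t2 by ring]; exact hsne)
  have hlin : HasDerivAt (fun s : ℝ => 1 - 6*s*t2) (-(6*t2)) t1 := by
    have h := ((hasDerivAt_id t1).const_mul (6*t2)).const_sub 1
    simp only [mul_one] at h
    convert h using 2 with s
    · rfl
    · rfl
    all_goals simp only [id]; ring
  have hda : HasDerivAt (fun s : ℝ => (1 - 6*s*t2 - Real.sqrt (1 - 12 * s * t2)) / (6 * t2^2))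
      ((-(6*t2) - (-(6*t2) / Real.sqrt (1 - 12*t1*t2))) / (6 * t2^2)) t1 :=
    (hlin.sub (sqrt_hda t2 t1 h)).div_const (6*t2^2)
  have hsne : Real.sqrt (1 - 12*t1*t2) ≠ 0 := (Real.sqrt_pos.2 h).ne'
  show deriv _ t1 = _
  rw [hev.deriv_eq, hda.deriv]
  have hsne' : Real.sqrt (1 - t2*12*t1) ≠ 0 := by rw [show 1 - t2*12*t1 = 1 - 12*t1*t2 by ring]; exact hsne
  field_simp
  ring

theorem stmt14 :
    (∀ t1 t2 : ℝ, t2 ≠ 0 → 12 * t1 * t2 < 1 →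
      Sfun t1 t2 = (1 - Real.sqrt (1 - 12 * t1 * t2)) / (t2 * Real.sqrt (1 - 12 * t1 * t2))) ∧
    (∀ t1 t2 : ℝ, t2 ≠ 0 →
      ((0 < 12 * t1 * t2 ∧ 12 * t1 * t2 < 1) ∨ (t1 ≠ 0 ∧ 12 * t1 * t2 < 0)) →
      Sfun t1 t2 ≠ 0) := by
  constructor
  · intro t1 t2 ht2 h
    exact Sfun_eq t1 t2 ht2 (by linarith)
  · intro t1 t2 ht2 hcase
    have h : 0 < 1 - 12 * t1 * t2 := by rcases hcase with ⟨_, h⟩ | ⟨_, h⟩ <;> linarith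
    rw [Sfun_eq t1 t2 ht2 h]
    have hspos : 0 < Real.sqrt (1 - 12*t1*t2) := Real.sqrt_pos.2 h
    have hsq : Real.sqrt (1 - 12*t1*t2) ^ 2 = 1 - 12*t1*t2 := Real.sq_sqrt h.le
    have hden : t2 * Real.sqrt (1 - 12*t1*t2) ≠ 0 := mul_ne_zero ht2 hspos.ne'
    have hnum : 1 - Real.sqrt (1 - 12*t1*t2) ≠ 0 := by
      rcases hcase with ⟨h1, h2⟩ | ⟨h1, h2⟩
      · have : Real.sqrt (1 - 12*t1*t2) < 1 := by nlinarith
        linarith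
      · have : 1 < Real.sqrt (1 - 12*t1*t2) := by nlinarith
        linarith
    exact div_ne_zero hnum hden
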